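/- Let ψ = Σ_{i=1}^{d_1} λ_i μ_i ⊗ ν_i be a vector in ℂ^{d_1}⊗ℂ^{d_2} in Schmidt form, i.e., λ_i ≥ 0, {μ_i} orthonormal in ℂ^{d_1} and {ν_i} orthonormal in ℂ^{d_2}. Then every eigenvalue of the Hermitian matrix (ψψ*)^{T_A} belongs to the set {λ_i λ_j : i ≠ j} ∪ {−λ_i λ_j : i ≠ j} ∪ {λ_i² : i} ∪ {0}. In particular, the largest eigenvalue of (ψψ*)^{T_A} equals max_i λ_i² (provided not all λ_i vanish). -/

import Mathlib

open Matrix Finset ComplexOrder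

/-- Partial transpose with respect to the first tensor factor of `ℂ^{d₁} ⊗ ℂ^{d₂}`:
`(X^{T_A})_{(i,j),(k,l)} = X_{(k,j),(i,l)}`. -/
def ptA {d1 d2 : ℕ} (X : Matrix (Fin d1 × Fin d2) (Fin d1 × Fin d2) ℂ) :
    Matrix (Fin d1 × Fin d2) (Fin d1 × Fin d2) ℂ :=
  fun p q => X (q.1, p.2) (p.1, q.2)

private lemma ptA_mulVec_formula {d1 d2 : ℕ} (lam : Fin d1 → ℝ)
    (μ : Fin d1 → EuclideanSpace ℂ (Fin d1))
    (ν : Fin d1 → EuclideanSpace ℂ (Fin d2))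
    (ψ : Fin d1 × Fin d2 → ℂ)
    (hψ : ∀ x, ψ x = ∑ i, (lam i : ℂ) * μ i x.1 * ν i x.2)
    (v : Fin d1 × Fin d2 → ℂ) (p : Fin d1 × Fin d2) :
    (ptA (Matrix.vecMulVec ψ (star ψ)) *ᵥ v) p
      = ∑ c, ∑ d, (lam c : ℂ) * (lam d : ℂ) * ((starRingEnd ℂ) (μ d p.1)) * (ν c p.2) *
          (∑ q : Fin d1 × Fin d2, μ c q.1 * (starRingEnd ℂ) (ν d q.2) * v q) := by
  simp only [ptA, Matrix.mulVec, dotProduct, Matrix.vecMulVec_apply, Pi.star_apply,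
    hψ, Complex.star_def, map_sum, _root_.map_mul, Complex.conj_ofReal]
  conv_rhs => rw [Finset.sum_comm]
  simp only [Finset.sum_mul, Finset.mul_sum]
  rw [Finset.sum_comm]
  refine Finset.sum_congr rfl fun c _ => ?_
  rw [Finset.sum_comm]
  refine Finset.sum_congr rfl fun d _ => ?_
  refine Finset.sum_congr rfl fun q _ => ?_
  ring

private lemma ptA_test {d1 d2 : ℕ} (lam : Fin d1 → ℝ)
    (μ : Fin d1 → EuclideanSpace ℂ (Fin d1)) (hμ : Orthonormal ℂ μ)
    (ν : Fin d1 → EuclideanSpace ℂ (Fin d2)) (hν : Orthonormal ℂ ν)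
    (F : Fin d1 → Fin d1 → ℂ) (a b : Fin d1) :
    ∑ q : Fin d1 × Fin d2, μ a q.1 * (starRingEnd ℂ) (ν b q.2) *
        (∑ c, ∑ d, (lam c : ℂ) * (lam d : ℂ) * ((starRingEnd ℂ) (μ d q.1)) * (ν c q.2) * F c d)
      = (lam b : ℂ) * (lam a : ℂ) * F b a := by
  have hμo : ∀ c d : Fin d1, ∑ k, (starRingEnd ℂ) (μ c k) * μ d k = if c = d then 1 else 0 := by
    intro c d
    simpa [PiLp.inner_apply, RCLike.inner_apply, mul_comm] using orthonormal_iff_ite.mp hμ c d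
  have hνo : ∀ c d : Fin d1, ∑ l, (starRingEnd ℂ) (ν c l) * ν d l = if c = d then 1 else 0 := by
    intro c d
    simpa [PiLp.inner_apply, RCLike.inner_apply, mul_comm] using orthonormal_iff_ite.mp hν c d
  calc ∑ q : Fin d1 × Fin d2, μ a q.1 * (starRingEnd ℂ) (ν b q.2) *
        (∑ c, ∑ d, (lam c : ℂ) * (lam d : ℂ) * ((starRingEnd ℂ) (μ d q.1)) * (ν c q.2) * F c d)
      = ∑ c, ∑ d, ∑ q : Fin d1 × Fin d2, μ a q.1 * (starRingEnd ℂ) (ν b q.2) *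
          ((lam c : ℂ) * (lam d : ℂ) * ((starRingEnd ℂ) (μ d q.1)) * (ν c q.2) * F c d) := by
        simp only [Finset.mul_sum]
        rw [Finset.sum_comm]
        exact Finset.sum_congr rfl fun c _ => Finset.sum_comm
    _ = ∑ c, ∑ d, ((lam c : ℂ) * (lam d : ℂ) * F c d) *
          ((∑ k, (starRingEnd ℂ) (μ d k) * μ a k) * (∑ l, (starRingEnd ℂ) (ν b l) * ν c l)) := by
        refine Finset.sum_congr rfl fun c _ => Finset.sum_congr rfl fun d _ => ?_
        rw [Fintype.sum_prod_type, Finset.sum_mul_sum, Finset.mul_sum]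
        refine Finset.sum_congr rfl fun k _ => ?_
        rw [Finset.mul_sum]
        refine Finset.sum_congr rfl fun l _ => ?_
        ring
    _ = (lam b : ℂ) * (lam a : ℂ) * F b a := by
        simp only [hμo, hνo]
        simp [Finset.sum_ite_eq, Finset.sum_ite_eq', mul_ite, ite_mul, mul_one, mul_zero,
          zero_mul, one_mul]

theorem eigenvalues_partial_transpose_pure_state
    {d1 d2 : ℕ} (lam : Fin d1 → ℝ) (hlam : ∀ i, 0 ≤ lam i)
    (μ : Fin d1 → EuclideanSpace ℂ (Fin d1)) (hμ : Orthonormal ℂ μ)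
    (ν : Fin d1 → EuclideanSpace ℂ (Fin d2)) (hν : Orthonormal ℂ ν)
    (ψ : Fin d1 × Fin d2 → ℂ)
    (hψ : ∀ x, ψ x = ∑ i, (lam i : ℂ) * μ i x.1 * ν i x.2)
    (hH : (ptA (Matrix.vecMulVec ψ (star ψ))).IsHermitian) :
    (∀ t : ℂ, (∃ v : Fin d1 × Fin d2 → ℂ, v ≠ 0 ∧
        (ptA (Matrix.vecMulVec ψ (star ψ))) *ᵥ v = t • v) →
      (∃ i j, i ≠ j ∧ (t = ((lam i * lam j : ℝ) : ℂ) ∨ t = -((lam i * lam j : ℝ) : ℂ)))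
        ∨ (∃ i, t = ((lam i ^ 2 : ℝ) : ℂ)) ∨ t = 0) ∧
    ((∃ i, lam i ≠ 0) → (⨆ p, hH.eigenvalues p) = ⨆ i, lam i ^ 2) := by
  set M := ptA (Matrix.vecMulVec ψ (star ψ)) with hM
  -- Part 1
  have part1 : ∀ t : ℂ, (∃ v : Fin d1 × Fin d2 → ℂ, v ≠ 0 ∧ M *ᵥ v = t • v) →
      (∃ i j, i ≠ j ∧ (t = ((lam i * lam j : ℝ) : ℂ) ∨ t = -((lam i * lam j : ℝ) : ℂ)))
        ∨ (∃ i, t = ((lam i ^ 2 : ℝ) : ℂ)) ∨ t = 0 := by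
    rintro t ⟨v, hv0, hv⟩
    set C : Fin d1 → Fin d1 → ℂ :=
      fun a b => ∑ q : Fin d1 × Fin d2, μ a q.1 * (starRingEnd ℂ) (ν b q.2) * v q with hC
    have E : ∀ a b, t * C a b = (lam b : ℂ) * (lam a : ℂ) * C b a := by
      intro a b
      have h1 : ∑ q : Fin d1 × Fin d2, μ a q.1 * (starRingEnd ℂ) (ν b q.2) * ((M *ᵥ v) q)
          = (lam b : ℂ) * (lam a : ℂ) * C b a := by
        simp only [hM, ptA_mulVec_formula lam μ ν ψ hψ v]
        exact ptA_test lam μ hμ ν hν C a b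
      rw [hv] at h1
      rw [← h1, hC]
      simp only [Pi.smul_apply, smul_eq_mul, Finset.mul_sum]
      exact Finset.sum_congr rfl fun q _ => by ring
    by_cases hCz : ∀ a b, C a b = 0
    · right; right
      have hMv : M *ᵥ v = 0 := by
        funext p
        rw [ptA_mulVec_formula lam μ ν ψ hψ v p]
        have hz : ∀ c d : Fin d1,
            (∑ q : Fin d1 × Fin d2, μ c q.1 * (starRingEnd ℂ) (ν d q.2) * v q) = 0 := hCz
        simp [hz]
      rw [hv] at hMv
      rcases smul_eq_zero.mp hMv with h | h
      · exact h
      · exact absurd h hv0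
    · push_neg at hCz
      obtain ⟨a, b, hab0⟩ := hCz
      by_cases hab : a = b
      · subst hab
        right; left
        refine ⟨a, ?_⟩
        have ht : t = (lam a : ℂ) * (lam a : ℂ) := by
          rcases mul_eq_mul_right_iff.mp (E a a) with h | h
          · exact h
          · exact absurd h hab0
        rw [ht]; push_cast; ring
      · left
        refine ⟨a, b, hab, ?_⟩
        have e1 := E a b
        have e2 := E b a
        have key : (t * t - ((lam a : ℂ) * lam b) * ((lam a : ℂ) * lam b)) * C a b = 0 := by
          have : t * (t * C a b) = t * ((lam b : ℂ) * lam a * C b a) := by rw [e1]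
          rw [show t * ((lam b : ℂ) * lam a * C b a) = (lam b : ℂ) * lam a * (t * C b a) by ring,
            e2] at this
          linear_combination this
        have h2 : t * t = ((lam a : ℂ) * lam b) * ((lam a : ℂ) * lam b) := by
          rcases mul_eq_zero.mp key with h | h
          · linear_combination h
          · exact absurd h hab0
        rcases mul_self_eq_mul_self_iff.mp h2 with h | h
        · left; rw [h]; push_cast; ring
        · right; rw [h]; push_cast; ring
  refine ⟨part1, ?_⟩
  -- Part 2
  rintro ⟨i', hi'⟩
  haveI : Nonempty (Fin d1) := ⟨i'⟩
  haveI : Nonempty (Fin d2) := by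
    rcases Nat.eq_zero_or_pos d2 with h | h
    case inr => exact ⟨⟨0, h⟩⟩
    · exfalso
      have h1 := hν.1 i'
      subst h
      rw [EuclideanSpace.norm_eq] at h1
      simp at h1
  obtain ⟨i₀, hi₀⟩ := Finite.exists_max (fun i => lam i ^ 2)
  have hr : (⨆ i, lam i ^ 2) = lam i₀ ^ 2 := by
    refine le_antisymm (ciSup_le hi₀) (le_ciSup (f := fun i => lam i ^ 2) (Set.Finite.bddAbove (Set.finite_range _)) i₀)
  have hr0 : 0 ≤ lam i₀ ^ 2 := sq_nonneg _
  -- the eigenvector for lam i₀ ^ 2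
  set w : Fin d1 × Fin d2 → ℂ :=
    fun q => (starRingEnd ℂ) (μ i₀ q.1) * ν i₀ q.2 with hw
  have hμo : ∀ c d : Fin d1, ∑ k, (starRingEnd ℂ) (μ c k) * μ d k = if c = d then 1 else 0 := by
    intro c d
    simpa [PiLp.inner_apply, RCLike.inner_apply, mul_comm] using orthonormal_iff_ite.mp hμ c d
  have hνo : ∀ c d : Fin d1, ∑ l, (starRingEnd ℂ) (ν c l) * ν d l = if c = d then 1 else 0 := by
    intro c d
    simpa [PiLp.inner_apply, RCLike.inner_apply, mul_comm] using orthonormal_iff_ite.mp hν c d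
  have hCw : ∀ c d : Fin d1, (∑ q : Fin d1 × Fin d2, μ c q.1 * (starRingEnd ℂ) (ν d q.2) * w q)
      = (if i₀ = c then 1 else 0) * (if d = i₀ then 1 else 0) := by
    intro c d
    have : (∑ q : Fin d1 × Fin d2, μ c q.1 * (starRingEnd ℂ) (ν d q.2) * w q)
        = (∑ k, (starRingEnd ℂ) (μ i₀ k) * μ c k) * (∑ l, (starRingEnd ℂ) (ν d l) * ν i₀ l) := by
      rw [Fintype.sum_prod_type, Finset.sum_mul_sum]
      refine Finset.sum_congr rfl fun k _ => Finset.sum_congr rfl fun l _ => ?_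
      simp only [hw]; ring
    rw [this, hμo, hνo]
  have hMw : M *ᵥ w = ((lam i₀ ^ 2 : ℝ) : ℂ) • w := by
    funext p
    rw [ptA_mulVec_formula lam μ ν ψ hψ w p]
    simp only [hCw]
    rw [Finset.sum_comm]
    simp [Finset.sum_ite_eq, Finset.sum_ite_eq', mul_ite, ite_mul, mul_one, mul_zero,
      zero_mul, one_mul, hw]
    ring
  have hw0 : w ≠ 0 := by
    obtain ⟨k0, hk0⟩ : ∃ k, μ i₀ k ≠ 0 := by
      by_contra h
      push_neg at h
      exact hμ.ne_zero i₀ (PiLp.ext fun k => by simpa using h k)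
    obtain ⟨l0, hl0⟩ : ∃ l, ν i₀ l ≠ 0 := by
      by_contra h
      push_neg at h
      exact hν.ne_zero i₀ (PiLp.ext fun l => by simpa using h l)
    intro h
    have := congrFun h (k0, l0)
    simp only [hw, Pi.zero_apply] at this
    exact (mul_ne_zero (by simpa using hk0) hl0) this
  -- eigenvalues of hH, via the eigenvector basis
  set b := hH.eigenvectorBasis with hb
  have hbv : ∀ p, M *ᵥ ⇑(b p) = ((hH.eigenvalues p : ℝ) : ℂ) • ⇑(b p) := by
    intro p
    rw [hH.mulVec_eigenvectorBasis p]
    funext x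
    simp [Complex.real_smul, hb]
  have hbne : ∀ p, (⇑(b p) : Fin d1 × Fin d2 → ℂ) ≠ 0 := by
    intro p hpz
    apply b.orthonormal.ne_zero p
    exact PiLp.ext fun x => by simpa using congrFun hpz x
  -- upper bound
  have hub : ∀ p, hH.eigenvalues p ≤ lam i₀ ^ 2 := by
    intro p
    rcases part1 ((hH.eigenvalues p : ℝ) : ℂ) ⟨⇑(b p), hbne p, hbv p⟩ with
      ⟨i, j, hij, h | h⟩ | ⟨i, h⟩ | h
    · rw [Complex.ofReal_inj.mp h]
      rcases le_total (lam i) (lam j) with hle | hle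
      · calc lam i * lam j ≤ lam j * lam j := mul_le_mul_of_nonneg_right hle (hlam j)
          _ = lam j ^ 2 := by ring
          _ ≤ lam i₀ ^ 2 := hi₀ j
      · calc lam i * lam j ≤ lam i * lam i := mul_le_mul_of_nonneg_left hle (hlam i)
          _ = lam i ^ 2 := by ring
          _ ≤ lam i₀ ^ 2 := hi₀ i
    · have heq : hH.eigenvalues p = -(lam i * lam j) := by exact_mod_cast h
      rw [heq]
      have : 0 ≤ lam i * lam j := mul_nonneg (hlam i) (hlam j)
      linarith
    · rw [Complex.ofReal_inj.mp h]; exact hi₀ i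
    · have : hH.eigenvalues p = 0 := by exact_mod_cast h
      rw [this]; exact hr0
  -- lam i₀ ^ 2 is attained as an eigenvalue of hH
  have hexists : ∃ p, hH.eigenvalues p = lam i₀ ^ 2 := by
    by_contra h
    push_neg at h
    have hinner : ∀ p, (∑ x, (starRingEnd ℂ) (b p x) * w x) = 0 := by
      intro p
      have h1 : ∑ x, (starRingEnd ℂ) (b p x) * (M *ᵥ w) x
          = ((lam i₀ ^ 2 : ℝ) : ℂ) * ∑ x, (starRingEnd ℂ) (b p x) * w x := by
        rw [hMw]
        simp only [Pi.smul_apply, smul_eq_mul, Finset.mul_sum]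
        exact Finset.sum_congr rfl fun x _ => by ring
      have h2 : ∑ x, (starRingEnd ℂ) (b p x) * (M *ᵥ w) x
          = ((hH.eigenvalues p : ℝ) : ℂ) * ∑ x, (starRingEnd ℂ) (b p x) * w x := by
        have herm : ∀ x y, M x y = (starRingEnd ℂ) (M y x) := by
          intro x y
          conv_lhs => rw [← hH]
          rfl
        calc ∑ x, (starRingEnd ℂ) (b p x) * (M *ᵥ w) x
            = ∑ x, ∑ y, (starRingEnd ℂ) (b p x) * (M x y * w y) := by
              refine Finset.sum_congr rfl fun x _ => ?_
              simp only [Matrix.mulVec, dotProduct, Finset.mul_sum]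
          _ = ∑ y, (∑ x, (starRingEnd ℂ) (M y x * b p x)) * w y := by
              rw [Finset.sum_comm]
              refine Finset.sum_congr rfl fun y _ => ?_
              rw [Finset.sum_mul]
              refine Finset.sum_congr rfl fun x _ => ?_
              rw [herm x y, _root_.map_mul]; ring
          _ = ∑ y, (starRingEnd ℂ) ((M *ᵥ ⇑(b p)) y) * w y := by
              refine Finset.sum_congr rfl fun y _ => ?_
              simp only [Matrix.mulVec, dotProduct, map_sum]
          _ = ∑ y, ((hH.eigenvalues p : ℝ) : ℂ) * ((starRingEnd ℂ) (b p y) * w y) := by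
              refine Finset.sum_congr rfl fun y _ => ?_
              rw [hbv p]
              simp only [Pi.smul_apply, smul_eq_mul, _root_.map_mul, Complex.conj_ofReal]
              ring
          _ = ((hH.eigenvalues p : ℝ) : ℂ) * ∑ x, (starRingEnd ℂ) (b p x) * w x := by
              rw [Finset.mul_sum]
      have h3 : (((hH.eigenvalues p : ℝ) : ℂ) - ((lam i₀ ^ 2 : ℝ) : ℂ))
          * (∑ x, (starRingEnd ℂ) (b p x) * w x) = 0 := by
        rw [sub_mul, ← h1, ← h2, sub_self]
      rcases mul_eq_zero.mp h3 with hc | hc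
      · exfalso
        apply h p
        have := sub_eq_zero.mp hc
        exact_mod_cast this
      · exact hc
    -- conclude w = 0, contradiction
    apply hw0
    have hrepr : b.repr (WithLp.toLp 2 w) = 0 := by
      ext p
      rw [b.repr_apply_apply]
      simpa [PiLp.inner_apply, RCLike.inner_apply, mul_comm] using hinner p
    have : (WithLp.toLp 2 w : EuclideanSpace ℂ (Fin d1 × Fin d2)) = 0 := by
      have := b.repr.map_eq_zero_iff.mp hrepr
      exact this
    exact (WithLp.toLp_eq_zero 2).mp this
  obtain ⟨p₀, hp₀⟩ := hexists
  rw [hr]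
  refine le_antisymm (ciSup_le hub) ?_
  calc lam i₀ ^ 2 = hH.eigenvalues p₀ := hp₀.symm
    _ ≤ ⨆ p, hH.eigenvalues p :=
      le_ciSup (f := fun p => hH.eigenvalues p) (Set.Finite.bddAbove (Set.finite_range _)) p₀
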